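/- Let q be a positive integer, ξ = e^{-iπ/q}, and η(z) = (z+1)/(z-1). Define Q(m) = (1 - ξ^m)·(1 + Σ_{k=1}^{q-1} (-1)^k ξ^{km} ∏_{j=1}^{k} η(ξ^j)). Then Q(m) = 0 for all m with 0 ≤ m ≤ q-1. -/

import Mathlib

open Complex Finset

/-- Lewy's lemma, Dirichlet case: with `ξ = e^{-iπ/q}`, `η(z) = (z+1)/(z-1)`,
the quantity `Q(m) = (1 - ξ^m)(1 + Σ_{k=1}^{q-1} (-1)^k ξ^{km} ∏_{j=1}^k η(ξ^j))`
vanishes for all `0 ≤ m ≤ q-1`. -/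
theorem lewy_vanishing_dirichlet (q : ℕ) (hq : 1 ≤ q)
    (ξ : ℂ) (hξ : ξ = Complex.exp (-(Real.pi * Complex.I) / q))
    (η : ℂ → ℂ) (hη : ∀ z, η z = (z + 1) / (z - 1))
    (m : ℕ) (hm : m ≤ q - 1) :
    (1 - ξ ^ m) *
        (1 + ∑ k ∈ Finset.Icc 1 (q - 1),
            (-1 : ℂ) ^ k * ξ ^ (k * m) * ∏ j ∈ Finset.Icc 1 k, η (ξ ^ j)) = 0 := by
  have hqC : (q:ℂ) ≠ 0 := Nat.cast_ne_zero.mpr (by omega)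
  have hpow : ∀ j : ℕ, ξ ^ j = Complex.exp (j * (-(Real.pi * Complex.I) / q)) := by
    intro j; rw [hξ, ← Complex.exp_nat_mul]
  have hξq : ξ ^ q = -1 := by
    rw [hpow]
    have h1 : (q:ℂ) * (-(Real.pi * Complex.I) / q) = -(Real.pi * Complex.I) := by
      field_simp
    rw [h1, Complex.exp_neg, Complex.exp_pi_mul_I]
    norm_num
  have hone : ∀ j : ℕ, 1 ≤ j → j < q → ξ ^ j ≠ 1 := by
    intro j h1 h2 hcon
    rw [hpow, Complex.exp_eq_one_iff] at hcon
    obtain ⟨n, hn⟩ := hcon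
    have hπI : (Real.pi : ℂ) * Complex.I ≠ 0 :=
      mul_ne_zero (by exact_mod_cast Real.pi_ne_zero) Complex.I_ne_zero
    have h3 : ((j:ℂ)) * (Real.pi * Complex.I) = (-(2*n*q)) * (Real.pi * Complex.I) := by
      field_simp at hn
      linear_combination (-(Real.pi * Complex.I)) * hn
    have h4 : (j:ℂ) = -(2*n*q) := mul_right_cancel₀ hπI h3
    have h5 : (j:ℤ) = -(2*n*q) := by exact_mod_cast h4
    have hj1 : (1:ℤ) ≤ (j:ℤ) := by exact_mod_cast h1
    have hj2 : (j:ℤ) < (q:ℤ) := by exact_mod_cast h2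
    have hq1 : (1:ℤ) ≤ (q:ℤ) := by exact_mod_cast hq
    rcases le_or_gt 0 n with h | h
    · nlinarith
    · nlinarith
  have hden : ∀ j : ℕ, 1 ≤ j → j ≤ q → (1:ℂ) - ξ ^ j ≠ 0 := by
    intro j h1 h2
    rcases eq_or_lt_of_le h2 with rfl | h2
    · rw [hξq]; norm_num
    · exact sub_ne_zero.mpr (Ne.symm (hone j h1 h2))
  set a : ℕ → ℂ := fun k => ∏ j ∈ Finset.Icc 1 k, ((1 + ξ^j)/(1 - ξ^j)) with ha
  have haq : a q = 0 := by
    apply Finset.prod_eq_zero (Finset.mem_Icc.mpr ⟨hq, le_refl q⟩)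
    rw [hξq]; norm_num
  have hrec : ∀ k : ℕ, k + 1 ≤ q → a k * (1 + ξ^(k+1)) = a (k+1) * (1 - ξ^(k+1)) := by
    intro k hk
    have hstep : a (k+1) = a k * ((1 + ξ^(k+1))/(1 - ξ^(k+1))) := by
      rw [ha]
      exact Finset.prod_Icc_succ_top (by omega) _
    rw [hstep]
    have hd := hden (k+1) (by omega) hk
    field_simp
  set F : ℂ → ℂ := fun x => ∑ k ∈ Finset.range q, a k * x ^ k with hF
  have hfun : ∀ x : ℂ, (1 - x) * F x = (1 + ξ * x) * F (ξ * x) := by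
    intro x
    have key : ∑ k ∈ Finset.range q, a k * (1 - ξ^k) * x^k
        = ∑ k ∈ Finset.range q, a k * (1 + ξ^(k+1)) * x^(k+1) := by
      have h1 : ∀ k ∈ Finset.range q, a k * (1 + ξ^(k+1)) * x^(k+1)
          = a (k+1) * (1 - ξ^(k+1)) * x^(k+1) := by
        intro k hk
        rw [hrec k (Finset.mem_range.mp hk)]
      rw [Finset.sum_congr rfl h1]
      have e1 := Finset.sum_range_succ (fun k => a k * (1 - ξ^k) * x^k) q
      have e2 := Finset.sum_range_succ' (fun k => a k * (1 - ξ^k) * x^k) q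
      rw [e1] at e2
      have hfq : a q * (1 - ξ^q) * x^q = 0 := by rw [haq]; ring
      have hf0 : a 0 * (1 - ξ^0) * x^0 = 0 := by simp
      rw [hfq, hf0, add_zero, add_zero] at e2
      exact e2
    have expand : (1 - x) * F x - (1 + ξ * x) * F (ξ * x)
        = ∑ k ∈ Finset.range q, (a k * (1 - ξ^k) * x^k - a k * (1 + ξ^(k+1)) * x^(k+1)) := by
      simp only [hF, Finset.mul_sum, ← Finset.sum_sub_distrib]
      apply Finset.sum_congr rfl
      intro k _
      ring
    rw [Finset.sum_sub_distrib, key, sub_self] at expand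
    exact sub_eq_zero.mp expand
  have main : ∀ d m2 : ℕ, m2 + d + 1 = q → (1 - ξ ^ m2) * F (ξ ^ m2) = 0 := by
    intro d
    induction d with
    | zero =>
      intro m2 hm2
      have h := hfun (ξ ^ m2)
      rw [← pow_succ'] at h
      rw [h]
      have hmq : m2 + 1 = q := by omega
      rw [hmq, hξq]
      ring
    | succ d ih =>
      intro m2 hm2
      have h := hfun (ξ ^ m2)
      rw [← pow_succ'] at h
      have h2 := ih (m2+1) (by omega)
      have hne2 : (1 : ℂ) - ξ ^ (m2+1) ≠ 0 := hden (m2+1) (by omega) (by omega)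
      have hF0 : F (ξ ^ (m2+1)) = 0 := by
        rcases mul_eq_zero.mp h2 with h' | h'
        · exact absurd h' hne2
        · exact h'
      rw [h, hF0, mul_zero]
  have hterm : ∀ k : ℕ, a k = (-1:ℂ)^k * ∏ j ∈ Finset.Icc 1 k, η (ξ^j) := by
    intro k
    show (∏ j ∈ Finset.Icc 1 k, ((1 + ξ^j)/(1 - ξ^j))) = _
    have hc : ∀ j ∈ Finset.Icc 1 k, (1 + ξ^j)/(1 - ξ^j) = (-1) * η (ξ^j) := by
      intro j _
      rw [hη]
      rw [show (1:ℂ) - ξ^j = -(ξ^j - 1) by ring, div_neg, add_comm]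
      ring
    rw [Finset.prod_congr rfl hc, Finset.prod_mul_distrib, Finset.prod_const,
      Nat.card_Icc]
    simp
  have hFm : 1 + ∑ k ∈ Finset.Icc 1 (q-1), (-1:ℂ)^k * ξ^(k*m) * ∏ j ∈ Finset.Icc 1 k, η (ξ^j)
      = F (ξ^m) := by
    have hgen : ∀ k : ℕ, (-1:ℂ)^k * ξ^(k*m) * ∏ j ∈ Finset.Icc 1 k, η (ξ^j)
        = a k * (ξ^m)^k := by
      intro k
      rw [hterm k, mul_comm k m, pow_mul]
      ring
    rw [Finset.sum_congr rfl (fun k _ => hgen k)]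
    obtain ⟨n, rfl⟩ : ∃ n, q = n + 1 := ⟨q - 1, by omega⟩
    simp only [Nat.add_sub_cancel]
    rw [show F (ξ^m) = ∑ k ∈ Finset.range (n+1), a k * (ξ^m) ^ k from rfl,
      Finset.sum_range_succ' (fun k => a k * (ξ^m)^k) n,
      ← Finset.Ico_add_one_right_eq_Icc, Finset.sum_Ico_eq_sum_range]
    simp only [Nat.add_sub_cancel, Nat.succ_sub_one]
    have ha0 : a 0 = 1 := by
      show (∏ j ∈ Finset.Icc 1 0, ((1 + ξ^j)/(1 - ξ^j))) = 1
      simp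
    rw [ha0]
    simp only [pow_zero, mul_one]
    rw [add_comm]
    congr 1
    apply Finset.sum_congr rfl
    intro i _
    rw [add_comm 1 i]
  rw [hFm]
  exact main (q - 1 - m) m (by omega)
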